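/- Let q be a prime power, and let 0 ≤ m ≤ n be integers. The number of m × n matrices over the finite field F_q that are in reduced row-echelon form and have rank m equals the Gaussian binomial coefficient [[n, m]]_q = ∏_{i=1}^{m} (q^{n−i+1} − 1)/(q^{i} − 1). -/

import Mathlib

/-- A matrix is in reduced row-echelon form: zero rows lie below nonzero rows; the
leading (first nonzero) entry of every nonzero row is `1` and is the only nonzero
entry in its column; and the leading entries occur in strictly increasing column
positions from top to bottom. -/
def IsRREF {K : Type} [Field K] {m n : ℕ} (M : Matrix (Fin m) (Fin n) K) : Prop :=
  (∀ i i' : Fin m, i ≤ i' → (∀ j, M i j = 0) → ∀ j, M i' j = 0) ∧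
  (∀ (i : Fin m) (j : Fin n), M i j ≠ 0 → (∀ j' : Fin n, j' < j → M i j' = 0) →
      M i j = 1 ∧ ∀ i' : Fin m, i' ≠ i → M i' j = 0) ∧
  (∀ (i i' : Fin m) (j j' : Fin n), i < i' →
      M i j ≠ 0 → (∀ l : Fin n, l < j → M i l = 0) →
      M i' j' ≠ 0 → (∀ l : Fin n, l < j' → M i' l = 0) → j < j')

namespace CardRREFAux

variable {K : Type} [Field K]

/-- "Nice" matrices: every row nonzero, plus the pivot conditions of RREF. -/
def Nice {m n : ℕ} (M : Matrix (Fin m) (Fin n) K) : Prop :=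
  (∀ i, ∃ j, M i j ≠ 0) ∧
  (∀ (i : Fin m) (j : Fin n), M i j ≠ 0 → (∀ j' : Fin n, j' < j → M i j' = 0) →
      M i j = 1 ∧ ∀ i' : Fin m, i' ≠ i → M i' j = 0) ∧
  (∀ (i i' : Fin m) (j j' : Fin n), i < i' →
      M i j ≠ 0 → (∀ l : Fin n, l < j → M i l = 0) →
      M i' j' ≠ 0 → (∀ l : Fin n, l < j' → M i' l = 0) → j < j')

lemma exists_pivot {m n : ℕ} {M : Matrix (Fin m) (Fin n) K} {i : Fin m}
    (h : ∃ j, M i j ≠ 0) : ∃ j, M i j ≠ 0 ∧ ∀ l, l < j → M i l = 0 := by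
  classical
  obtain ⟨j0, hj0⟩ := h
  obtain ⟨j, hj, hmin⟩ := Finset.exists_min_image
    (Finset.univ.filter fun j => M i j ≠ 0) id ⟨j0, by simp [hj0]⟩
  refine ⟨j, (Finset.mem_filter.1 hj).2, fun l hl => ?_⟩
  by_contra hne
  exact absurd (hmin l (by simp [hne])) (not_le.2 hl)

lemma nice_rank {m n : ℕ} {M : Matrix (Fin m) (Fin n) K} (h : Nice M) : M.rank = m := by
  classical
  have hrows : LinearIndependent K (fun i => M i) := by
    rw [Fintype.linearIndependent_iff]
    intro g hg i
    obtain ⟨j, hj, hlt⟩ := exists_pivot (h.1 i)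
    obtain ⟨h1, h0⟩ := h.2.1 i j hj hlt
    have hsum : ∑ k, g k * M k j = g i := by
      rw [Finset.sum_eq_single i]
      · rw [h1, mul_one]
      · intro k _ hki; rw [h0 k hki, mul_zero]
      · intro hi; exact absurd (Finset.mem_univ i) hi
    have hg' := congrFun hg j
    simp only [Finset.sum_apply, Pi.smul_apply, smul_eq_mul, Pi.zero_apply] at hg'
    rw [hsum] at hg'
    exact hg'
  rw [← Matrix.rank_transpose, Matrix.rank, Matrix.range_mulVecLin, Matrix.col_transpose]
  change Module.finrank K (Submodule.span K (Set.range fun i => M i)) = m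
  simpa using finrank_span_eq_card hrows

lemma rank_ne_of_zero_row {m n : ℕ} {M : Matrix (Fin m) (Fin n) K} {i0 : Fin m}
    (h0 : ∀ j, M i0 j = 0) : M.rank ≠ m := by
  classical
  have hset : Set.range (fun i => M i) =
      insert 0 ((Finset.univ.erase i0).image (fun i => M i) : Set (Fin n → K)) := by
    ext x
    constructor
    · rintro ⟨i, rfl⟩
      by_cases hi : i = i0
      · subst hi
        exact Set.mem_insert_iff.2 (Or.inl (funext h0))
      · exact Set.mem_insert_iff.2 (Or.inr (by
          simp only [Finset.coe_image, Set.mem_image, Finset.mem_coe, Finset.mem_erase]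
          exact ⟨i, ⟨hi, Finset.mem_univ i⟩, rfl⟩))
    · intro hx
      rcases Set.mem_insert_iff.1 hx with hx | hx
      · exact ⟨i0, by rw [hx]; funext j; simp [h0 j]⟩
      · simp only [Finset.coe_image, Set.mem_image, Finset.mem_coe, Finset.mem_erase] at hx
        obtain ⟨i, _, rfl⟩ := hx
        exact ⟨i, rfl⟩
  have hle : M.rank ≤ m - 1 := by
    rw [← Matrix.rank_transpose, Matrix.rank, Matrix.range_mulVecLin,
      Matrix.col_transpose]
    change Module.finrank K (Submodule.span K (Set.range fun i => M i)) ≤ m - 1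
    have h1 : Submodule.span K (Set.range fun i => M i) =
        Submodule.span K (((Finset.univ.erase i0).image (fun i => M i) : Finset (Fin n → K)) :
          Set (Fin n → K)) := by
      rw [hset, Submodule.span_insert_zero]
    rw [h1]
    refine le_trans (finrank_span_finset_le_card _) (le_trans Finset.card_image_le ?_)
    rw [Finset.card_erase_of_mem (Finset.mem_univ i0), Finset.card_univ, Fintype.card_fin]
  have hm : 0 < m := i0.pos
  omega

lemma nice_iff {m n : ℕ} (M : Matrix (Fin m) (Fin n) K) :
    Nice M ↔ (IsRREF M ∧ M.rank = m) := by
  constructor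
  · intro h
    refine ⟨⟨?_, h.2.1, h.2.2⟩, nice_rank h⟩
    intro i i' _ hz j
    obtain ⟨j0, hj0⟩ := h.1 i
    exact absurd (hz j0) hj0
  · rintro ⟨hr, hrank⟩
    refine ⟨?_, hr.2.1, hr.2.2⟩
    intro i
    by_contra hc
    push_neg at hc
    exact rank_ne_of_zero_row hc hrank

/-! ### The extension/restriction maps -/

def extA {m n : ℕ} (A : Matrix (Fin m) (Fin n) K) : Matrix (Fin (m + 1)) (Fin (n + 1)) K :=
  Matrix.of (Fin.snoc (fun i => Fin.snoc (A i) (0 : K)) (Fin.snoc (0 : Fin n → K) (1 : K)))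

def extB {m n : ℕ} (B : Matrix (Fin (m + 1)) (Fin n) K) (v : Fin (m + 1) → K) :
    Matrix (Fin (m + 1)) (Fin (n + 1)) K :=
  Matrix.of (fun i => Fin.snoc (B i) (v i))

@[simp] lemma extA_cc {m n : ℕ} (A : Matrix (Fin m) (Fin n) K) (i : Fin m) (j : Fin n) :
    extA A i.castSucc j.castSucc = A i j := by
  simp [extA]

@[simp] lemma extA_lc {m n : ℕ} (A : Matrix (Fin m) (Fin n) K) (j : Fin n) :
    extA A (Fin.last m) j.castSucc = 0 := by
  simp [extA]

@[simp] lemma extA_cl {m n : ℕ} (A : Matrix (Fin m) (Fin n) K) (i : Fin m) :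
    extA A i.castSucc (Fin.last n) = 0 := by
  simp [extA]

@[simp] lemma extA_ll {m n : ℕ} (A : Matrix (Fin m) (Fin n) K) :
    extA A (Fin.last m) (Fin.last n) = 1 := by
  simp [extA]

@[simp] lemma extB_c {m n : ℕ} (B : Matrix (Fin (m + 1)) (Fin n) K) (v : Fin (m + 1) → K)
    (i : Fin (m + 1)) (j : Fin n) : extB B v i j.castSucc = B i j := by
  simp [extB]

@[simp] lemma extB_l {m n : ℕ} (B : Matrix (Fin (m + 1)) (Fin n) K) (v : Fin (m + 1) → K)
    (i : Fin (m + 1)) : extB B v i (Fin.last n) = v i := by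
  simp [extB]

/-- The case-distinguishing property: the last row is concentrated in the last column. -/
def Pa {m n : ℕ} (M : Matrix (Fin (m + 1)) (Fin (n + 1)) K) : Prop :=
  ∀ j : Fin (n + 1), j ≠ Fin.last n → M (Fin.last m) j = 0

lemma lastcol_of_pa {m n : ℕ} {M : Matrix (Fin (m + 1)) (Fin (n + 1)) K}
    (h : Nice M) (hp : Pa M) :
    M (Fin.last m) (Fin.last n) = 1 ∧
      ∀ i : Fin (m + 1), i ≠ Fin.last m → M i (Fin.last n) = 0 := by
  obtain ⟨j0, hj0⟩ := h.1 (Fin.last m)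
  have hj0l : j0 = Fin.last n := by
    by_contra hne; exact hj0 (hp j0 hne)
  subst hj0l
  exact h.2.1 (Fin.last m) (Fin.last n) hj0
    (fun l hl => hp l (Fin.lt_last_iff_ne_last.1 hl))

lemma nice_subA {m n : ℕ} {M : Matrix (Fin (m + 1)) (Fin (n + 1)) K}
    (h : Nice M) (hp : Pa M) : Nice (M.submatrix Fin.castSucc Fin.castSucc) := by
  obtain ⟨hll, hcol⟩ := lastcol_of_pa h hp
  refine ⟨?_, ?_, ?_⟩
  · intro i
    obtain ⟨j, hj⟩ := h.1 i.castSucc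
    have hjne : j ≠ Fin.last n := by
      rintro rfl
      exact hj (hcol i.castSucc (Fin.ne_last_of_lt (Fin.castSucc_lt_last i)))
    obtain ⟨l, rfl⟩ := Fin.exists_castSucc_eq.2 hjne
    exact ⟨l, hj⟩
  · intro i j hj hpre
    have hpre' : ∀ l : Fin (n + 1), l < j.castSucc → M i.castSucc l = 0 := by
      intro l hl
      obtain ⟨l', rfl⟩ := Fin.exists_castSucc_eq.2
        (Fin.ne_last_of_lt (lt_of_lt_of_le hl (Fin.castSucc_lt_last j).le))
      exact hpre l' (Fin.castSucc_lt_castSucc_iff.1 hl)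
    obtain ⟨h1, h0⟩ := h.2.1 i.castSucc j.castSucc hj hpre'
    refine ⟨h1, fun i' hi' => h0 i'.castSucc (fun he => hi' (Fin.castSucc_injective _ he))⟩
  · intro i i' j j' hii hj hpre hj' hpre'
    have hpre2 : ∀ l : Fin (n + 1), l < j.castSucc → M i.castSucc l = 0 := by
      intro l hl
      obtain ⟨l', rfl⟩ := Fin.exists_castSucc_eq.2
        (Fin.ne_last_of_lt (lt_of_lt_of_le hl (Fin.castSucc_lt_last j).le))
      exact hpre l' (Fin.castSucc_lt_castSucc_iff.1 hl)
    have hpre2' : ∀ l : Fin (n + 1), l < j'.castSucc → M i'.castSucc l = 0 := by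
      intro l hl
      obtain ⟨l', rfl⟩ := Fin.exists_castSucc_eq.2
        (Fin.ne_last_of_lt (lt_of_lt_of_le hl (Fin.castSucc_lt_last j').le))
      exact hpre' l' (Fin.castSucc_lt_castSucc_iff.1 hl)
    have := h.2.2 i.castSucc i'.castSucc j.castSucc j'.castSucc
      (Fin.castSucc_lt_castSucc_iff.2 hii) hj hpre2 hj' hpre2'
    exact Fin.castSucc_lt_castSucc_iff.1 this

lemma extA_eq {m n : ℕ} {M : Matrix (Fin (m + 1)) (Fin (n + 1)) K}
    (h : Nice M) (hp : Pa M) : extA (M.submatrix Fin.castSucc Fin.castSucc) = M := by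
  obtain ⟨hll, hcol⟩ := lastcol_of_pa h hp
  funext i j
  induction i using Fin.lastCases with
  | last =>
    induction j using Fin.lastCases with
    | last => rw [extA_ll, hll]
    | cast l => rw [extA_lc, hp l.castSucc (Fin.ne_last_of_lt (Fin.castSucc_lt_last l))]
  | cast k =>
    induction j using Fin.lastCases with
    | last => rw [extA_cl, hcol k.castSucc (Fin.ne_last_of_lt (Fin.castSucc_lt_last k))]
    | cast l => rw [extA_cc]; rfl

lemma nice_extA {m n : ℕ} {A : Matrix (Fin m) (Fin n) K} (h : Nice A) :
    Nice (extA A) ∧ Pa (extA A) := by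
  have hPa : Pa (extA A) := by
    intro j hj
    obtain ⟨l, rfl⟩ := Fin.exists_castSucc_eq.2 hj
    exact extA_lc A l
  refine ⟨⟨?_, ?_, ?_⟩, hPa⟩
  · intro i
    induction i using Fin.lastCases with
    | last => exact ⟨Fin.last n, by rw [extA_ll]; exact one_ne_zero⟩
    | cast k =>
      obtain ⟨j, hj⟩ := h.1 k
      exact ⟨j.castSucc, by rw [extA_cc]; exact hj⟩
  · intro i j hj hpre
    induction i using Fin.lastCases with
    | last =>
      induction j using Fin.lastCases with
      | last =>
        refine ⟨extA_ll A, fun i' hi' => ?_⟩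
        obtain ⟨k, rfl⟩ := Fin.exists_castSucc_eq.2 hi'
        exact extA_cl A k
      | cast l => exact absurd (extA_lc A l) hj
    | cast k =>
      induction j using Fin.lastCases with
      | last =>
        exfalso
        obtain ⟨l0, hl0⟩ := h.1 k
        exact hl0 (by rw [← extA_cc A k l0]; exact hpre l0.castSucc (Fin.castSucc_lt_last l0))
      | cast l =>
        rw [extA_cc] at hj
        have hpreA : ∀ l' : Fin n, l' < l → A k l' = 0 := by
          intro l' hl'
          rw [← extA_cc A k l']
          exact hpre l'.castSucc (Fin.castSucc_lt_castSucc_iff.2 hl')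
        obtain ⟨h1, h0⟩ := h.2.1 k l hj hpreA
        refine ⟨by rw [extA_cc]; exact h1, fun i' hi' => ?_⟩
        induction i' using Fin.lastCases with
        | last => exact extA_lc A l
        | cast k' =>
          rw [extA_cc]
          exact h0 k' (fun he => hi' (by rw [he]))
  · intro i i' j j' hii hj hpre hj' hpre'
    induction i' using Fin.lastCases with
    | last =>
      -- j' must be last
      have hj'l : j' = Fin.last n := by
        by_contra hne
        obtain ⟨l, rfl⟩ := Fin.exists_castSucc_eq.2 hne
        exact hj' (extA_lc A l)
      subst hj'l
      -- i is castSucc, j ≠ last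
      obtain ⟨k, rfl⟩ := Fin.exists_castSucc_eq.2 (Fin.ne_last_of_lt hii)
      have hjne : j ≠ Fin.last n := by
        rintro rfl
        exact hj (extA_cl A k)
      exact Fin.lt_last_iff_ne_last.2 hjne
    | cast k' =>
      obtain ⟨k, rfl⟩ := Fin.exists_castSucc_eq.2
        (Fin.ne_last_of_lt (lt_of_lt_of_le hii (Fin.castSucc_lt_last k').le))
      have hjne : j ≠ Fin.last n := by rintro rfl; exact hj (extA_cl A k)
      have hj'ne : j' ≠ Fin.last n := by rintro rfl; exact hj' (extA_cl A k')
      obtain ⟨l, rfl⟩ := Fin.exists_castSucc_eq.2 hjne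
      obtain ⟨l', rfl⟩ := Fin.exists_castSucc_eq.2 hj'ne
      rw [extA_cc] at hj hj'
      have hpreA : ∀ x : Fin n, x < l → A k x = 0 := fun x hx => by
        rw [← extA_cc A k x]; exact hpre x.castSucc (Fin.castSucc_lt_castSucc_iff.2 hx)
      have hpreA' : ∀ x : Fin n, x < l' → A k' x = 0 := fun x hx => by
        rw [← extA_cc A k' x]; exact hpre' x.castSucc (Fin.castSucc_lt_castSucc_iff.2 hx)
      exact Fin.castSucc_lt_castSucc_iff.2
        (h.2.2 k k' l l' (Fin.castSucc_lt_castSucc_iff.1 hii) hj hpreA hj' hpreA')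

lemma nice_subB {m n : ℕ} {M : Matrix (Fin (m + 1)) (Fin (n + 1)) K}
    (h : Nice M) (hp : ¬ Pa M) : Nice (M.submatrix id Fin.castSucc) := by
  -- the pivot of the last row is < last
  obtain ⟨jl, hjl, hjlpre⟩ := exists_pivot (h.1 (Fin.last m))
  have hjlne : jl ≠ Fin.last n := by
    rintro rfl
    exact hp (fun j hj => hjlpre j (Fin.lt_last_iff_ne_last.2 hj))
  refine ⟨?_, ?_, ?_⟩
  · intro i
    obtain ⟨ji, hji, hjipre⟩ := exists_pivot (h.1 i)
    have hjine : ji ≠ Fin.last n := by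
      by_cases hi : i = Fin.last m
      · subst hi
        intro he
        -- ji is the pivot; pivot unique? both jl and ji pivots of last row: jl = ji
        rcases lt_trichotomy ji jl with hlt | heq | hgt
        · exact hji (hjlpre ji hlt)
        · exact hjlne (heq.symm.trans he)
        · exact hjl (hjipre jl hgt)
      · have hilt : i < Fin.last m := Fin.lt_last_iff_ne_last.2 hi
        have := h.2.2 i (Fin.last m) ji jl hilt hji hjipre hjl hjlpre
        exact Fin.ne_last_of_lt (lt_of_lt_of_le this (Fin.le_last jl))
    obtain ⟨l, rfl⟩ := Fin.exists_castSucc_eq.2 hjine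
    exact ⟨l, hji⟩
  · intro i j hj hpre
    have hpre' : ∀ l : Fin (n + 1), l < j.castSucc → M i l = 0 := by
      intro l hl
      obtain ⟨l', rfl⟩ := Fin.exists_castSucc_eq.2
        (Fin.ne_last_of_lt (lt_of_lt_of_le hl (Fin.castSucc_lt_last j).le))
      exact hpre l' (Fin.castSucc_lt_castSucc_iff.1 hl)
    obtain ⟨h1, h0⟩ := h.2.1 i j.castSucc hj hpre'
    exact ⟨h1, fun i' hi' => h0 i' hi'⟩
  · intro i i' j j' hii hj hpre hj' hpre'
    have hpre2 : ∀ l : Fin (n + 1), l < j.castSucc → M i l = 0 := by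
      intro l hl
      obtain ⟨l', rfl⟩ := Fin.exists_castSucc_eq.2
        (Fin.ne_last_of_lt (lt_of_lt_of_le hl (Fin.castSucc_lt_last j).le))
      exact hpre l' (Fin.castSucc_lt_castSucc_iff.1 hl)
    have hpre2' : ∀ l : Fin (n + 1), l < j'.castSucc → M i' l = 0 := by
      intro l hl
      obtain ⟨l', rfl⟩ := Fin.exists_castSucc_eq.2
        (Fin.ne_last_of_lt (lt_of_lt_of_le hl (Fin.castSucc_lt_last j').le))
      exact hpre' l' (Fin.castSucc_lt_castSucc_iff.1 hl)
    exact Fin.castSucc_lt_castSucc_iff.1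
      (h.2.2 i i' j.castSucc j'.castSucc hii hj hpre2 hj' hpre2')

lemma extB_eq {m n : ℕ} (M : Matrix (Fin (m + 1)) (Fin (n + 1)) K) :
    extB (M.submatrix id Fin.castSucc) (fun i => M i (Fin.last n)) = M := by
  funext i j
  induction j using Fin.lastCases with
  | last => rw [extB_l]
  | cast l => rw [extB_c]; rfl

lemma nice_extB {m n : ℕ} {B : Matrix (Fin (m + 1)) (Fin n) K} (h : Nice B)
    (v : Fin (m + 1) → K) : Nice (extB B v) ∧ ¬ Pa (extB B v) := by
  have hnotlast : ∀ (i : Fin (m + 1)) (j : Fin (n + 1)), extB B v i j ≠ 0 →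
      (∀ l : Fin (n + 1), l < j → extB B v i l = 0) → j ≠ Fin.last n := by
    intro i j hj hpre he
    obtain ⟨l0, hl0⟩ := h.1 i
    refine hl0 ?_
    rw [← extB_c B v i l0]
    exact hpre l0.castSucc (he ▸ Fin.castSucc_lt_last l0)
  constructor
  · refine ⟨?_, ?_, ?_⟩
    · intro i
      obtain ⟨l, hl⟩ := h.1 i
      exact ⟨l.castSucc, by rw [extB_c]; exact hl⟩
    · intro i j hj hpre
      obtain ⟨l, rfl⟩ := Fin.exists_castSucc_eq.2 (hnotlast i j hj hpre)
      rw [extB_c] at hj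
      have hpreB : ∀ x : Fin n, x < l → B i x = 0 := fun x hx => by
        rw [← extB_c B v i x]; exact hpre x.castSucc (Fin.castSucc_lt_castSucc_iff.2 hx)
      obtain ⟨h1, h0⟩ := h.2.1 i l hj hpreB
      exact ⟨by rw [extB_c]; exact h1, fun i' hi' => by rw [extB_c]; exact h0 i' hi'⟩
    · intro i i' j j' hii hj hpre hj' hpre'
      obtain ⟨l, rfl⟩ := Fin.exists_castSucc_eq.2 (hnotlast i j hj hpre)
      obtain ⟨l', rfl⟩ := Fin.exists_castSucc_eq.2 (hnotlast i' j' hj' hpre')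
      rw [extB_c] at hj hj'
      have hpreB : ∀ x : Fin n, x < l → B i x = 0 := fun x hx => by
        rw [← extB_c B v i x]; exact hpre x.castSucc (Fin.castSucc_lt_castSucc_iff.2 hx)
      have hpreB' : ∀ x : Fin n, x < l' → B i' x = 0 := fun x hx => by
        rw [← extB_c B v i' x]; exact hpre' x.castSucc (Fin.castSucc_lt_castSucc_iff.2 hx)
      exact Fin.castSucc_lt_castSucc_iff.2 (h.2.2 i i' l l' hii hj hpreB hj' hpreB')
  · intro hpa
    obtain ⟨l, hl⟩ := h.1 (Fin.last m)
    refine hl ?_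
    rw [← extB_c B v (Fin.last m) l]
    exact hpa l.castSucc (Fin.ne_last_of_lt (Fin.castSucc_lt_last l))

/-! ### Counting -/

noncomputable def NN (K : Type) [Field K] (m n : ℕ) : ℕ :=
  Nat.card {M : Matrix (Fin m) (Fin n) K // Nice M}

lemma NN_zero (n : ℕ) : NN K 0 n = 1 := by
  rw [NN, Nat.card_eq_one_iff_unique]
  constructor
  · exact ⟨fun a b => Subtype.ext (by funext i; exact i.elim0)⟩
  · exact ⟨⟨Matrix.of (fun i _ => i.elim0), fun i => i.elim0, fun i => i.elim0,
      fun i => i.elim0⟩⟩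

lemma NN_succ_zero (m : ℕ) : NN K (m + 1) 0 = 0 := by
  rw [NN]
  have : IsEmpty {M : Matrix (Fin (m + 1)) (Fin 0) K // Nice M} := by
    constructor
    rintro ⟨M, hM⟩
    obtain ⟨j, -⟩ := hM.1 0
    exact j.elim0
  exact Nat.card_of_isEmpty

lemma NN_succ_succ [Fintype K] (m n : ℕ) :
    NN K (m + 1) (n + 1) = NN K m n + Fintype.card K ^ (m + 1) * NN K (m + 1) n := by
  classical
  have e : {M : Matrix (Fin (m + 1)) (Fin (n + 1)) K // Nice M} ≃
      {A : Matrix (Fin m) (Fin n) K // Nice A} ⊕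
      ((Fin (m + 1) → K) × {B : Matrix (Fin (m + 1)) (Fin n) K // Nice B}) := by
    refine ⟨fun M => if hp : Pa M.1 then
        Sum.inl ⟨M.1.submatrix Fin.castSucc Fin.castSucc, nice_subA M.2 hp⟩
      else Sum.inr (fun i => M.1 i (Fin.last n),
        ⟨M.1.submatrix id Fin.castSucc, nice_subB M.2 hp⟩),
      fun x => match x with
        | Sum.inl A => ⟨extA A.1, (nice_extA A.2).1⟩
        | Sum.inr (v, B) => ⟨extB B.1 v, (nice_extB B.2 v).1⟩, ?_, ?_⟩
    · rintro ⟨M, hM⟩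
      by_cases hp : Pa M
      · simp only [dif_pos hp]
        exact Subtype.ext (extA_eq hM hp)
      · simp only [dif_neg hp]
        exact Subtype.ext (extB_eq M)
    · rintro (⟨A, hA⟩ | ⟨v, B, hB⟩)
      · simp only [dif_pos (nice_extA hA).2]
        refine congrArg Sum.inl (Subtype.ext ?_)
        funext i j
        show extA A i.castSucc j.castSucc = A i j
        exact extA_cc A i j
      · simp only [dif_neg (nice_extB hB v).2]
        refine congrArg Sum.inr ?_
        have h1 : (fun i => extB B v i (Fin.last n)) = v := funext fun i => extB_l B v i
        have h2 : (extB B v).submatrix id Fin.castSucc = B := by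
          funext i j
          show extB B v (id i) j.castSucc = B i j
          exact extB_c B v i j
        rw [Prod.mk.injEq]
        exact ⟨h1, Subtype.ext h2⟩
  have hcardfun : Nat.card (Fin (m + 1) → K) = Fintype.card K ^ (m + 1) := by
    rw [Nat.card_fun, Nat.card_eq_fintype_card (α := Fin (m + 1)), Fintype.card_fin,
      Nat.card_eq_fintype_card]
  rw [NN, Nat.card_congr e, Nat.card_sum, Nat.card_prod, hcardfun]
  rfl

lemma pow_sub_one_ne_zero {q : ℕ} (hq : 2 ≤ q) (k : ℕ) : ((q : ℚ) ^ (k + 1) - 1) ≠ 0 := by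
  have hq' : (1 : ℚ) < (q : ℚ) := by exact_mod_cast (by omega : 1 < q)
  have : (1 : ℚ) < (q : ℚ) ^ (k + 1) := one_lt_pow₀ hq' (Nat.succ_ne_zero k)
  exact sub_ne_zero.2 (ne_of_gt this)

lemma prod_ne_zero {q : ℕ} (hq : 2 ≤ q) (m : ℕ) :
    ∏ i ∈ Finset.range m, ((q : ℚ) ^ (i + 1) - 1) ≠ 0 :=
  Finset.prod_ne_zero_iff.2 (fun i _ => pow_sub_one_ne_zero hq i)

lemma pascal {q : ℕ} (hq : 2 ≤ q) (n m : ℕ) :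
    ∏ i ∈ Finset.range (m + 1), ((q : ℚ) ^ (n + 1 - i) - 1) / ((q : ℚ) ^ (i + 1) - 1) =
      ∏ i ∈ Finset.range m, ((q : ℚ) ^ (n - i) - 1) / ((q : ℚ) ^ (i + 1) - 1) +
      (q : ℚ) ^ (m + 1) *
        ∏ i ∈ Finset.range (m + 1), ((q : ℚ) ^ (n - i) - 1) / ((q : ℚ) ^ (i + 1) - 1) := by
  set Q : ℚ := (q : ℚ) with hQ
  set A : ℚ := ∏ i ∈ Finset.range m, (Q ^ (n - i) - 1) with hA
  set B : ℚ := ∏ i ∈ Finset.range m, (Q ^ (i + 1) - 1) with hB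
  have hBne : B ≠ 0 := prod_ne_zero hq m
  have hMne : Q ^ (m + 1) - 1 ≠ 0 := pow_sub_one_ne_zero hq m
  have hD : B * (Q ^ (m + 1) - 1) ≠ 0 := mul_ne_zero hBne hMne
  have e1 : ∏ i ∈ Finset.range (m + 1), ((Q : ℚ) ^ (n + 1 - i) - 1) / (Q ^ (i + 1) - 1) =
      (A * (Q ^ (n + 1) - 1)) / (B * (Q ^ (m + 1) - 1)) := by
    rw [Finset.prod_div_distrib, Finset.prod_range_succ (fun i => Q ^ (i + 1) - 1),
      Finset.prod_range_succ' (fun i => Q ^ (n + 1 - i) - 1)]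
    simp only [Nat.add_sub_add_right, Nat.sub_zero]
    rfl
  have e2 : ∏ i ∈ Finset.range m, (Q ^ (n - i) - 1) / (Q ^ (i + 1) - 1) = A / B := by
    rw [Finset.prod_div_distrib]
  have e3 : ∏ i ∈ Finset.range (m + 1), (Q ^ (n - i) - 1) / (Q ^ (i + 1) - 1) =
      (A * (Q ^ (n - m) - 1)) / (B * (Q ^ (m + 1) - 1)) := by
    rw [Finset.prod_div_distrib, Finset.prod_range_succ, Finset.prod_range_succ]
  have key : A * (Q ^ (n + 1) - 1) =
      A * (Q ^ (m + 1) - 1) + Q ^ (m + 1) * (A * (Q ^ (n - m) - 1)) := by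
    by_cases hmn : m ≤ n
    · have hpow : Q ^ (m + 1) * Q ^ (n - m) = Q ^ (n + 1) := by
        rw [← pow_add]
        congr 1
        omega
      linear_combination (-A) * hpow
    · have hA0 : A = 0 := by
        rw [hA]
        refine Finset.prod_eq_zero (Finset.mem_range.2 (by omega : n < m)) ?_
        simp [Nat.sub_self]
      rw [hA0]; ring
  rw [e1, e2, e3, ← mul_div_assoc, div_add_div _ _ hBne hD, div_eq_div_iff hD
    (mul_ne_zero hBne hD)]
  linear_combination (B * B * (Q ^ (m + 1) - 1)) * key

lemma NN_eq {q : ℕ} [Fintype K] (hK : Fintype.card K = q) (hq : 2 ≤ q) :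
    ∀ n m : ℕ, ((NN K m n : ℚ)) =
      ∏ i ∈ Finset.range m, ((q : ℚ) ^ (n - i) - 1) / ((q : ℚ) ^ (i + 1) - 1) := by
  intro n
  induction n with
  | zero =>
    intro m
    match m with
    | 0 => simp [NN_zero]
    | m + 1 =>
      rw [NN_succ_zero, Nat.cast_zero,
        Finset.prod_eq_zero (Finset.mem_range.2 (Nat.succ_pos m)) (by norm_num)]
  | succ n ih =>
    intro m
    match m with
    | 0 => simp [NN_zero]
    | m + 1 =>
      rw [NN_succ_succ]
      push_cast
      rw [hK, ih m, ih (m + 1), pascal hq n m]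

end CardRREFAux

theorem card_rref_rank_eq_gaussian (q m n : ℕ)
    (hq : ∃ p r : ℕ, p.Prime ∧ 0 < r ∧ q = p ^ r) (hmn : m ≤ n)
    (K : Type) [Field K] [Fintype K] (hK : Fintype.card K = q) :
    ({M : Matrix (Fin m) (Fin n) K | IsRREF M ∧ M.rank = m}.ncard : ℚ) =
      ∏ i ∈ Finset.range m, ((q : ℚ) ^ (n - i) - 1) / ((q : ℚ) ^ (i + 1) - 1) := by
  classical
  have hset : {M : Matrix (Fin m) (Fin n) K | IsRREF M ∧ M.rank = m} =
      {M : Matrix (Fin m) (Fin n) K | CardRREFAux.Nice M} := by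
    ext M
    simp only [Set.mem_setOf_eq]
    exact (CardRREFAux.nice_iff M).symm
  have hq2 : 2 ≤ q := by
    obtain ⟨p, r, hp, hr, rfl⟩ := hq
    calc 2 ≤ p := hp.two_le
      _ = p ^ 1 := (pow_one p).symm
      _ ≤ p ^ r := Nat.pow_le_pow_right hp.pos hr
  rw [hset, ← Nat.card_coe_set_eq]
  have : Nat.card {M : Matrix (Fin m) (Fin n) K | CardRREFAux.Nice M} =
      CardRREFAux.NN K m n := rfl
  rw [this, CardRREFAux.NN_eq hK hq2 n m]
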